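/- Let Q be a quadri-algebra over a field F of characteristic zero. Then (Q, ∧, ∨), where x ∧ y = x ↗ y + x ↖ y and x ∨ y = x ↘ y + x ↙ y, is a dendriform algebra (with ∧ playing the role of ≺ and ∨ playing the role of ≻); that is, for all x, y, z ∈ Q: (x ∨ y) ∧ z = x ∨ (y ∧ z); (x ∧ y) ∧ z = x ∧ (y ∧ z) + x ∧ (y ∨ z); and x ∨ (y ∨ z) = (x ∧ y) ∨ z + (x ∨ y) ∨ z. -/
import Mathlib


/-- If `Q` is a quadri-algebra (ops `se = ↘`, `ne = ↗`, `nw = ↖`, `sw = ↙`)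
over a field of characteristic zero, then `(Q, ∧, ∨)` with `x ∧ y = x ↗ y + x ↖ y`
and `x ∨ y = x ↘ y + x ↙ y` is a dendriform algebra (with `∧` as `≺` and `∨` as `≻`). -/
theorem quadri_vertical_dendriform
    (F : Type*) [Field F] [CharZero F]
    (Q : Type*) [AddCommGroup Q] [Module F Q]
    (se ne nw sw : Q →ₗ[F] Q →ₗ[F] Q)
    (q1 : ∀ x y z : Q, nw (nw x y) z = nw x (se y z + ne y z + nw y z + sw y z))
    (q2 : ∀ x y z : Q, nw (ne x y) z = ne x (nw y z + sw y z))
    (q3 : ∀ x y z : Q, ne (ne x y + nw x y) z = ne x (ne y z + se y z))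
    (q4 : ∀ x y z : Q, nw (sw x y) z = sw x (ne y z + nw y z))
    (q5 : ∀ x y z : Q, nw (se x y) z = se x (nw y z))
    (q6 : ∀ x y z : Q, ne (se x y + sw x y) z = se x (ne y z))
    (q7 : ∀ x y z : Q, sw (nw x y + sw x y) z = sw x (se y z + sw y z))
    (q8 : ∀ x y z : Q, sw (ne x y + se x y) z = se x (sw y z))
    (q9 : ∀ x y z : Q, se (se x y + ne x y + nw x y + sw x y) z = se x (se y z)) :
    (∀ x y z : Q,
        ne (se x y + sw x y) z + nw (se x y + sw x y) z =
          se x (ne y z + nw y z) + sw x (ne y z + nw y z)) ∧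
    (∀ x y z : Q,
        ne (ne x y + nw x y) z + nw (ne x y + nw x y) z =
          (ne x (ne y z + nw y z) + nw x (ne y z + nw y z)) +
            (ne x (se y z + sw y z) + nw x (se y z + sw y z))) ∧
    (∀ x y z : Q,
        se x (se y z + sw y z) + sw x (se y z + sw y z) =
          (se (ne x y + nw x y) z + sw (ne x y + nw x y) z) +
            (se (se x y + sw x y) z + sw (se x y + sw x y) z)) := by
  refine ⟨fun x y z => ?_, fun x y z => ?_, fun x y z => ?_⟩
  · have h4 := q4 x y z; have h5 := q5 x y z; have h6 := q6 x y z
    simp only [map_add, LinearMap.add_apply] at *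
    linear_combination (norm := abel) h6 + h5 + h4
  · have h1 := q1 x y z; have h2 := q2 x y z; have h3 := q3 x y z
    simp only [map_add, LinearMap.add_apply] at *
    linear_combination (norm := abel) h3 + h2 + h1
  · have h7 := q7 x y z; have h8 := q8 x y z; have h9 := q9 x y z
    simp only [map_add, LinearMap.add_apply] at *
    linear_combination (norm := abel) -h9 - h7 - h8
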